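/- Let g:[0,1]^n → ℝ be twice continuously differentiable with Hessian that is diagonal at every point (i.e., H_{ij}(w) = 0 for all i ≠ j and all w ∈ [0,1]^n). Then for each i, the integrated gradient attribution ∫₀¹ ∂_i g(t·𝟏) dt equals the marginal gain g(e_i) − g(0). -/

import Mathlib

open Set intervalIntegral

/-- If the Hessian of `g` is diagonal at every point of `[0,1]^n`, then the
integrated gradient attribution of each feature equals its marginal gain. -/
theorem stmt_1 {n : ℕ} (g : (Fin n → ℝ) → ℝ) (hg : ContDiff ℝ 2 g)
    (hdiag : ∀ w ∈ Set.Icc (0 : Fin n → ℝ) 1, ∀ i j : Fin n, i ≠ j →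
      fderiv ℝ (fun x => fderiv ℝ g x (Pi.single j 1)) w (Pi.single i 1) = 0)
    (i : Fin n) :
    (∫ t in (0:ℝ)..1, fderiv ℝ g (fun _ => t) (Pi.single i 1)) =
      g (Pi.single i 1) - g 0 := by
  set e : Fin n → ℝ := Pi.single i 1 with he
  set D : (Fin n → ℝ) → ℝ := fun x => fderiv ℝ g x e with hD
  have hgd : Differentiable ℝ g := hg.differentiable (by norm_num)
  have hfd : ContDiff ℝ 1 (fderiv ℝ g) := hg.fderiv_right (le_refl _)
  have hDc1 : ContDiff ℝ 1 D := hfd.clm_apply contDiff_const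
  have hDd : Differentiable ℝ D := hDc1.differentiable (by norm_num)
  -- D is constant along non-i directions within Icc
  have key : ∀ t ∈ Icc (0:ℝ) 1, D (fun _ => t) = D (t • e) := by
    intro t ht
    set v : Fin n → ℝ := fun j => if j = i then 0 else t with hv
    set q : ℝ → (Fin n → ℝ) := fun s => t • e + s • v with hq
    have hq0 : q 0 = t • e := by simp [hq]
    have hq1 : q 1 = fun _ => t := by
      funext j
      by_cases hj : j = i <;> simp [hq, hv, he, hj, Pi.single_apply]
    have hmem : ∀ s ∈ Icc (0:ℝ) 1, q s ∈ Icc (0 : Fin n → ℝ) 1 := by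
      intro s hs
      constructor <;> intro j <;>
        by_cases hj : j = i <;>
        simp [hq, hv, he, hj, Pi.single_apply] <;>
        nlinarith [ht.1, ht.2, hs.1, hs.2]
    have hzero : ∀ s ∈ Icc (0:ℝ) 1, fderiv ℝ D (q s) v = 0 := by
      intro s hs
      have hw := hmem s hs
      have hrep : v = ∑ j, v j • (Pi.single j (1:ℝ) : Fin n → ℝ) := by
        funext k
        simp [Finset.sum_apply, Pi.single_apply, Finset.sum_ite_eq']
      rw [hrep, map_sum]
      refine Finset.sum_eq_zero fun j _ => ?_
      rw [map_smul]
      by_cases hj : j = i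
      · simp [hv, hj]
      · have := hdiag (q s) hw j i hj
        simp only [hD, he] at *
        rw [this, smul_zero]
    have hderiv : ∀ s ∈ Set.uIcc (0:ℝ) 1,
        HasDerivAt (fun s => D (q s)) ((fun _ : ℝ => (0:ℝ)) s) s := by
      intro s hs
      rw [Set.uIcc_of_le (by norm_num : (0:ℝ) ≤ 1)] at hs
      have h1 : HasDerivAt q v s := by
        have := ((hasDerivAt_id s).smul_const v).const_add (t • e)
        simpa [hq] using this
      have h2 : HasDerivAt (fun s => D (q s)) (fderiv ℝ D (q s) v) s :=
        (hDd (q s)).hasFDerivAt.comp_hasDerivAt s h1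
      simpa [hzero s hs] using h2
    have := intervalIntegral.integral_eq_sub_of_hasDerivAt hderiv
      (intervalIntegrable_const)
    simp only [intervalIntegral.integral_zero] at this
    rw [← hq1, ← hq0]
    exact sub_eq_zero.mp this.symm
  -- FTC along the i-axis
  have hderiv2 : ∀ t ∈ Set.uIcc (0:ℝ) 1,
      HasDerivAt (fun t : ℝ => g (t • e)) (D (t • e)) t := by
    intro t _
    have h1 : HasDerivAt (fun t : ℝ => t • e) e t := by
      simpa using (hasDerivAt_id t).smul_const e
    have := (hgd (t • e)).hasFDerivAt.comp_hasDerivAt t h1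
    exact this
  have hcont : Continuous fun t : ℝ => D (t • e) :=
    hDc1.continuous.comp (continuous_id.smul continuous_const)
  have hFTC := intervalIntegral.integral_eq_sub_of_hasDerivAt hderiv2
    (hcont.intervalIntegrable 0 1)
  have hcongr : (∫ t in (0:ℝ)..1, fderiv ℝ g (fun _ => t) (Pi.single i 1))
      = ∫ t in (0:ℝ)..1, D (t • e) := by
    refine intervalIntegral.integral_congr fun t ht => ?_
    rw [Set.uIcc_of_le (by norm_num : (0:ℝ) ≤ 1)] at ht
    exact key t ht
  rw [hcongr, hFTC]
  simp [he]
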